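/- Let K be a field of characteristic p > 0 with prime field K' = F_p, and let I ⊆ K[x₀,…,x_N] be the ideal of all K'-points of P^N(K) except one point q. Then the smallest degree n such that I_n contains a form not vanishing at q is n = N(p-1) + 1. -/

import Mathlib

open MvPolynomial Finset

/-- The homogeneous ideal of a point of projective space (given by a
representative `π`). -/
noncomputable def pointIdeal {K : Type} [Field K] {n : ℕ} (π : Fin n → K) :
    Ideal (MvPolynomial (Fin n) K) :=
  Ideal.span {f | (∃ d, f.IsHomogeneous d) ∧ eval π f = 0}

lemma sum_pow_zmod (p : ℕ) [Fact p.Prime] (i : ℕ) :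
    ∑ x : ZMod p, x ^ i = if (p - 1) ∣ i ∧ i ≠ 0 then -1 else 0 := by
  classical
  rcases eq_or_ne i 0 with rfl | hi
  · simp only [pow_zero, Finset.sum_const, Finset.card_univ, ZMod.card, nsmul_eq_mul, mul_one,
      ZMod.natCast_self, ne_eq, not_true_eq_false, and_false, if_false]
  · have h0 : ∑ x : ZMod p, x ^ i = ∑ x : (ZMod p)ˣ, (x : ZMod p) ^ i := by
      let φ : (ZMod p)ˣ ↪ ZMod p := ⟨fun x ↦ x, fun _ _ h => Units.ext h⟩
      have himg : univ.map φ = univ \ {0} := by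
        ext x
        simp only [mem_map, mem_univ, Function.Embedding.coeFn_mk, true_and, mem_sdiff,
          mem_singleton, φ]
        exact isUnit_iff_ne_zero
      calc ∑ x : ZMod p, x ^ i = ∑ x ∈ univ \ {(0 : ZMod p)}, x ^ i := by
            rw [← Finset.sum_sdiff (Finset.subset_univ {0}), Finset.sum_singleton,
              zero_pow hi, add_zero]
        _ = ∑ x : (ZMod p)ˣ, (x : ZMod p) ^ i := by
            rw [← himg, Finset.sum_map]
            rfl
    rw [h0, FiniteField.sum_pow_units, ZMod.card]
    simp [hi]

lemma eval_smul_of_isHomogeneous {K : Type*} [CommRing K] {σ : Type*} [Fintype σ]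
    {f : MvPolynomial σ K} {n : ℕ} (hf : f.IsHomogeneous n) (c : K) (x : σ → K) :
    eval (c • x) f = c ^ n * eval x f := by
  rw [eval_eq', eval_eq', Finset.mul_sum]
  refine Finset.sum_congr rfl fun d hd => ?_
  have hdeg : ∑ i, d i = n := by
    have h1 : d.degree = n := by
      by_contra h
      exact (mem_support_iff.mp hd) (hf.coeff_eq_zero h)
    rw [← h1, Finsupp.degree]
    exact (Finset.sum_subset (Finset.subset_univ _)
      (fun i _ hi => Finsupp.notMem_support_iff.mp hi)).symm
  calc coeff d f * ∏ i, (c • x) i ^ d i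
      = coeff d f * ∏ i, (c ^ d i * x i ^ d i) := by
        simp only [Pi.smul_apply, smul_eq_mul, mul_pow]
    _ = c ^ n * (coeff d f * ∏ i, x i ^ d i) := by
        rw [Finset.prod_mul_distrib, Finset.prod_pow_eq_pow_sum, hdeg]; ring

theorem stmt11 (p N : ℕ) (hp : p.Prime) (hN : 1 ≤ N)
    (K : Type) [Field K] [CharP K p]
    (q : Fin (N + 1) → K) (hq : q ≠ 0)
    (hq' : ∀ i, q i ∈ Set.range (Nat.cast : ℕ → K)) :
    -- representatives of the prime-field points of P^N other than q
    let S : Set (Fin (N + 1) → K) :=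
      {π | π ≠ 0 ∧ (∀ i, π i ∈ Set.range (Nat.cast : ℕ → K)) ∧
        ¬∃ c : K, π = c • q}
    let I : Ideal (MvPolynomial (Fin (N + 1)) K) := ⨅ π ∈ S, pointIdeal π
    IsLeast {n | ∃ f ∈ I, f.IsHomogeneous n ∧ eval q f ≠ 0}
      (N * (p - 1) + 1) := by
  intro S I
  classical
  haveI : Fact p.Prime := ⟨hp⟩
  have hp2 : 2 ≤ p := hp.two_le
  set φ : ZMod p →+* K := ZMod.castHom dvd_rfl K with hφdef
  have hφinj : Function.Injective φ := φ.injective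
  -- lift q to a ZMod p vector
  have hqlift : ∃ q' : Fin (N + 1) → ZMod p, ∀ i, φ (q' i) = q i := by
    choose nn hnn using hq'
    exact ⟨fun i => (nn i : ZMod p), fun i => by rw [map_natCast]; exact hnn i⟩
  obtain ⟨q', hq'φ⟩ := hqlift
  obtain ⟨i₀, hi₀⟩ : ∃ i, q i ≠ 0 := by
    by_contra h; push_neg at h; exact hq (funext h)
  have hq'i₀ : q' i₀ ≠ 0 := fun h => hi₀ (by rw [← hq'φ, h, map_zero])
  -- membership in I gives vanishing on S
  have hIeval : ∀ g ∈ I, ∀ π ∈ S, eval π g = 0 := by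
    intro g hg π hπ
    have h1 : g ∈ pointIdeal π := by
      simp only [I, Ideal.mem_iInf] at hg
      exact hg π hπ
    have h2 : pointIdeal π ≤ RingHom.ker (eval π) :=
      Ideal.span_le.mpr (fun f hf => hf.2)
    exact h2 h1
  -- lifting points of S
  have hlift : ∀ π ∈ S, ∃ π' : Fin (N + 1) → ZMod p, ∀ i, φ (π' i) = π i := by
    intro π hπ
    choose nn hnn using hπ.2.1
    exact ⟨fun i => (nn i : ZMod p), fun i => by rw [map_natCast]; exact hnn i⟩
  -- if a lifted vector is not a ZMod p multiple of q', it lies in S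
  have hmemS : ∀ a : Fin (N + 1) → ZMod p, (¬∃ t : ZMod p, a = t • q') →
      (fun i => φ (a i)) ∈ S := by
    intro a ha
    have ha0 : a ≠ 0 := by
      rintro rfl
      exact ha ⟨0, by simp⟩
    refine ⟨?_, ?_, ?_⟩
    · intro h
      apply ha0
      funext i
      have := congrFun h i
      simpa using hφinj (by simpa using this)
    · intro i
      exact ⟨(a i).val, by rw [← map_natCast φ, ZMod.natCast_rightInverse (a i)]⟩
    · rintro ⟨c, hc⟩
      apply ha
      set t : ZMod p := a i₀ * (q' i₀)⁻¹ with ht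
      have hct : c = φ t := by
        have h1 : φ (a i₀) = c * q i₀ := by
          have := congrFun hc i₀; simpa using this
        have h2 : φ t = φ (a i₀) * (q i₀)⁻¹ := by
          rw [ht, map_mul, map_inv₀, hq'φ]
        rw [h2, h1, mul_assoc, mul_inv_cancel₀ hi₀, mul_one]
      refine ⟨t, funext fun i => ?_⟩
      have h2 : φ (a i) = c * q i := by
        have := congrFun hc i; simpa using this
      apply hφinj
      rw [h2, hct, ← hq'φ i, ← map_mul]
      rfl
  constructor
  · -- membership: the explicit form
    set F : MvPolynomial (Fin (N + 1)) K :=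
      X i₀ * ∏ i ∈ Finset.univ.erase i₀,
        (X i₀ ^ (p - 1) - (C (q i₀) * X i - C (q i) * X i₀) ^ (p - 1)) with hFdef
    have hcard : (Finset.univ.erase i₀).card = N := by
      rw [Finset.card_erase_of_mem (Finset.mem_univ _), Finset.card_univ, Fintype.card_fin]
      omega
    have hFhom : F.IsHomogeneous (N * (p - 1) + 1) := by
      have hprod : (∏ i ∈ Finset.univ.erase i₀,
          (X i₀ ^ (p - 1) - (C (q i₀) * X i - C (q i) * X i₀) ^ (p - 1))).IsHomogeneous
          (N * (p - 1)) := by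
        have := MvPolynomial.IsHomogeneous.prod (Finset.univ.erase i₀)
          (fun i => X i₀ ^ (p - 1) - (C (q i₀) * X i - C (q i) * X i₀) ^ (p - 1))
          (fun _ => p - 1) (fun i _ => by
            refine MvPolynomial.IsHomogeneous.sub ?_ ?_
            · simpa using (isHomogeneous_X K i₀).pow (p - 1)
            · have h1 : (C (q i₀) * X i - C (q i) * X i₀ :
                  MvPolynomial (Fin (N + 1)) K).IsHomogeneous 1 :=
                ((isHomogeneous_X K i).C_mul _).sub ((isHomogeneous_X K i₀).C_mul _)
              simpa using h1.pow (p - 1))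
        simpa [Finset.sum_const, hcard, mul_comm] using this
      have h := (isHomogeneous_X K i₀).mul hprod
      rwa [show 1 + N * (p - 1) = N * (p - 1) + 1 from Nat.add_comm _ _] at h
    have hFq : eval q F ≠ 0 := by
      rw [hFdef]
      simp only [map_mul, eval_X, map_prod, map_sub, map_pow, eval_C]
      refine mul_ne_zero hi₀ (Finset.prod_ne_zero_iff.mpr fun i _ => ?_)
      have : q i₀ * q i - q i * q i₀ = 0 := by ring
      rw [this, zero_pow (by omega), sub_zero]
      exact pow_ne_zero _ hi₀
    have hFS : ∀ π ∈ S, eval π F = 0 := by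
      intro π hπ
      obtain ⟨π', hπ'⟩ := hlift π hπ
      rcases eq_or_ne (π i₀) 0 with h0 | h0
      · rw [hFdef]; simp [h0]
      · have hπ'i₀ : π' i₀ ≠ 0 := fun h => h0 (by rw [← hπ' i₀, h, map_zero])
        -- find a coordinate witnessing non-proportionality
        obtain ⟨j, hj, hjne⟩ : ∃ j ∈ Finset.univ.erase i₀,
            q' i₀ * π' j - q' j * π' i₀ ≠ 0 := by
          by_contra h
          push_neg at h
          apply hπ.2.2
          refine ⟨φ (π' i₀ * (q' i₀)⁻¹), funext fun i => ?_⟩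
          have hb : q' i₀ * π' i - q' i * π' i₀ = 0 := by
            rcases eq_or_ne i i₀ with rfl | hii
            · ring
            · exact h i (Finset.mem_erase.mpr ⟨hii, Finset.mem_univ _⟩)
          have hπi : π' i = π' i₀ * (q' i₀)⁻¹ * q' i := by
            apply mul_left_cancel₀ hq'i₀
            rw [show q' i₀ * (π' i₀ * (q' i₀)⁻¹ * q' i) =
              q' i₀ * (q' i₀)⁻¹ * (π' i₀ * q' i) by ring, mul_inv_cancel₀ hq'i₀, one_mul]
            linear_combination hb
          rw [← hπ' i, hπi, Pi.smul_apply, smul_eq_mul, ← hq'φ i, ← map_mul]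
        rw [hFdef, map_mul, map_prod]
        apply mul_eq_zero_of_right
        apply Finset.prod_eq_zero hj
        simp only [map_sub, map_pow, eval_X, eval_C, map_mul]
        have h1 : π i₀ ^ (p - 1) = 1 := by
          rw [← hπ' i₀, ← map_pow]
          have : π' i₀ ^ (p - 1) = 1 := by
            have := ZMod.pow_card_sub_one_eq_one hπ'i₀
            simpa using this
          rw [this, map_one]
        have h2 : (q i₀ * π j - q j * π i₀) ^ (p - 1) = 1 := by
          rw [← hq'φ i₀, ← hq'φ j, ← hπ' j, ← hπ' i₀, ← map_mul, ← map_mul, ← map_sub, ← map_pow]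
          have : (q' i₀ * π' j - q' j * π' i₀) ^ (p - 1) = 1 := by
            have := ZMod.pow_card_sub_one_eq_one hjne
            simpa using this
          rw [this, map_one]
        rw [h1, h2, sub_self]
    refine ⟨F, ?_, hFhom, hFq⟩
    simp only [I, Ideal.mem_iInf]
    intro π hπ
    exact Ideal.subset_span ⟨⟨N * (p - 1) + 1, hFhom⟩, hFS π hπ⟩
  · -- lower bound
    rintro n ⟨f, hfI, hfhom, hfq⟩
    by_contra hlt
    push_neg at hlt
    have hn : n ≤ N * (p - 1) := by omega
    set m : ℕ := N * (p - 1) - n with hm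
    set g : MvPolynomial (Fin (N + 1)) K := X i₀ ^ m * f with hgdef
    have hgh : g.IsHomogeneous (N * (p - 1)) := by
      have h1 : (X i₀ ^ m : MvPolynomial (Fin (N + 1)) K).IsHomogeneous m := by
        simpa using (isHomogeneous_X K i₀).pow m
      have := h1.mul hfhom
      rwa [show m + n = N * (p - 1) by omega] at this
    have hgq : eval q g ≠ 0 := by
      rw [hgdef, map_mul, map_pow, eval_X]
      exact mul_ne_zero (pow_ne_zero _ hi₀) hfq
    have hgS : ∀ π ∈ S, eval π g = 0 := by
      intro π hπ
      rw [hgdef, map_mul, hIeval f hfI π hπ, mul_zero]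
    -- the character sum
    have hE0 : N * (p - 1) ≠ 0 := by
      have : 0 < p - 1 := by omega
      positivity
    have h1 : ∑ a : Fin (N + 1) → ZMod p, eval (fun i => φ (a i)) g = 0 := by
      have hexp : ∀ a : Fin (N + 1) → ZMod p, eval (fun i => φ (a i)) g =
          ∑ d ∈ g.support, coeff d g * ∏ i, φ (a i) ^ d i := fun a => eval_eq' _ _
      rw [Finset.sum_congr rfl fun a _ => hexp a, Finset.sum_comm]
      refine Finset.sum_eq_zero fun d hd => ?_
      rw [← Finset.mul_sum]
      apply mul_eq_zero_of_right
      have hswap : ∑ a : Fin (N + 1) → ZMod p, ∏ i, φ (a i) ^ d i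
          = ∏ i, ∑ c : ZMod p, φ c ^ d i := by
        rw [← Fintype.piFinset_univ]
        exact Finset.sum_prod_piFinset Finset.univ (fun i c => φ c ^ d i)
      rw [hswap]
      -- some exponent is bad
      have hdeg : ∑ i, d i = N * (p - 1) := by
        have h1 : d.degree = N * (p - 1) := by
          by_contra h
          exact (mem_support_iff.mp hd) (hgh.coeff_eq_zero h)
        rw [← h1, Finsupp.degree]
        exact (Finset.sum_subset (Finset.subset_univ _)
          (fun i _ hi => Finsupp.notMem_support_iff.mp hi)).symm
      obtain ⟨i, hi⟩ : ∃ i, ¬((p - 1) ∣ d i ∧ d i ≠ 0) := by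
        by_contra h
        push_neg at h
        have hge : ∀ i, p - 1 ≤ d i := fun i =>
          Nat.le_of_dvd (Nat.pos_of_ne_zero (h i).2) (h i).1
        have : (N + 1) * (p - 1) ≤ ∑ i, d i := by
          calc (N + 1) * (p - 1) = ∑ _i : Fin (N + 1), (p - 1) := by
                simp [Finset.sum_const, Finset.card_univ, mul_comm]
            _ ≤ ∑ i, d i := Finset.sum_le_sum fun i _ => hge i
        rw [hdeg] at this
        have hp1 : 0 < p - 1 := by omega
        nlinarith
      apply Finset.prod_eq_zero (Finset.mem_univ i)
      have : ∑ c : ZMod p, φ c ^ d i = φ (∑ c : ZMod p, c ^ d i) := by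
        rw [map_sum]; simp [map_pow]
      rw [this, sum_pow_zmod p (d i), if_neg hi, map_zero]
    have h2 : ∑ a : Fin (N + 1) → ZMod p, eval (fun i => φ (a i)) g = - eval q g := by
      have hsub : ∀ a : Fin (N + 1) → ZMod p, a ∈ Finset.univ →
          a ∉ Finset.univ.image (fun t : ZMod p => t • q') →
          eval (fun i => φ (a i)) g = 0 := by
        intro a _ ha
        apply hgS
        apply hmemS
        rintro ⟨t, rfl⟩
        exact ha (Finset.mem_image.mpr ⟨t, Finset.mem_univ _, rfl⟩)
      rw [← Finset.sum_subset (Finset.subset_univ _) hsub]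
      have hinj : ∀ t ∈ Finset.univ, ∀ s ∈ Finset.univ,
          (fun t : ZMod p => t • q') t = (fun t : ZMod p => t • q') s → t = s := by
        intro t _ s _ hts
        have := congrFun hts i₀
        simp only [Pi.smul_apply, smul_eq_mul] at this
        exact mul_right_cancel₀ hq'i₀ this
      rw [Finset.sum_image hinj]
      have heach : ∀ t : ZMod p,
          eval (fun i => φ ((t • q') i)) g = φ t ^ (N * (p - 1)) * eval q g := by
        intro t
        have : (fun i => φ ((t • q') i)) = (φ t) • q := by
          funext i
          simp only [Pi.smul_apply, smul_eq_mul, map_mul, hq'φ]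
        rw [this, eval_smul_of_isHomogeneous hgh]
      rw [Finset.sum_congr rfl fun t _ => heach t, ← Finset.sum_mul]
      have hsum : ∑ t : ZMod p, φ t ^ (N * (p - 1)) = -1 := by
        have : ∑ t : ZMod p, φ t ^ (N * (p - 1)) = φ (∑ t : ZMod p, t ^ (N * (p - 1))) := by
          rw [map_sum]; simp [map_pow]
        rw [this, sum_pow_zmod p, if_pos ⟨⟨N, mul_comm _ _⟩, hE0⟩, map_neg, map_one]
      rw [hsum, neg_one_mul]
    rw [h1] at h2
    exact hgq (neg_eq_zero.mp h2.symm)
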